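/- Let B be a number operator algebra of finite type, i.e., B is Z^n-graded as B = ⊕_{p ∈ Z^n} B^p where B^p = {y ∈ B : [N_i, y] = p(i)·y for all i}, with N_i ∈ B for each i. If the components of each N_j satisfy N_j = Σ_p N_j^p with [N_i, N_j] central, then [N_i, N_j] = 0 for all i, j. -/

import Mathlib

set_option synthInstance.maxHeartbeats 1000000
set_option maxHeartbeats 1000000

/-- Let `B` be a `K`-algebra which is `ℤ^n`-graded by the joint eigenspaces
`B^p = {y | [N i, y] = p i • y}` of the commuting operators `ad (N i)`, i.e. the
submodules `Bp p` form an internal direct sum decomposition of `B`. If every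
commutator `[N i, N j]` is central, then `[N i, N j] = 0` for all `i, j`. -/
theorem stmt_2 (K : Type*) [Field K] [CharZero K] (n : ℕ)
    (B : Type*) [Ring B] [Algebra K B]
    (N : Fin n → B)
    (Bp : (Fin n → ℤ) → Submodule K B)
    (hBp : ∀ p, (Bp p : Set B) = {y | ∀ i, N i * y - y * N i = (p i) • y})
    (hdec : DirectSum.IsInternal Bp)
    (hcentral : ∀ i j, (N i * N j - N j * N i) ∈ Set.center B) :
    ∀ i j, N i * N j - N j * N i = 0 := by
  intro i j
  have hmem : ∀ p (y : B), y ∈ Bp p ↔ ∀ k, N k * y - y * N k = (p k) • y := by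
    intro p y
    rw [← SetLike.mem_coe, hBp p]; rfl
  set c := N i * N j - N j * N i with hc
  have hc0 : c ∈ Bp 0 := by
    rw [hmem]
    intro k
    have h := ((Set.mem_center_iff).mp (hcentral i j)).comm (N k)
    simp only [Pi.zero_apply, zero_smul]
    rw [sub_eq_zero, ← hc] at *
    rw [h]
  -- the commutator ad (N i) as an additive hom
  set L : B →+ B := AddMonoidHom.mulLeft (N i) - AddMonoidHom.mulRight (N i) with hL
  have hLapp : ∀ y : B, L y = N i * y - y * N i := fun y => rfl
  -- componentwise scaling map on the direct sum
  set F : (DirectSum _ fun p => ↥(Bp p)) →+ (DirectSum _ fun p => ↥(Bp p)) :=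
    DirectSum.toAddMonoid (fun p =>
      (DirectSum.of (fun p => ↥(Bp p)) p).comp ((p i) • AddMonoidHom.id ↥(Bp p))) with hF
  have hFof : ∀ (p : Fin n → ℤ) (v : ↥(Bp p)),
      F (DirectSum.of (fun p => ↥(Bp p)) p v)
        = DirectSum.of (fun p => ↥(Bp p)) p ((p i) • v) := by
    intro p v
    rw [hF, DirectSum.toAddMonoid_of]
    rfl
  have key : (DirectSum.coeAddMonoidHom Bp).comp F
      = L.comp (DirectSum.coeAddMonoidHom Bp) := by
    refine DirectSum.addHom_ext fun p v => ?_
    have hv := (hmem p (v : B)).mp v.2 i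
    simp only [AddMonoidHom.comp_apply]
    rw [hFof, DirectSum.coeAddMonoidHom_of, DirectSum.coeAddMonoidHom_of, hLapp, hv]
    simp
  obtain ⟨x, hx⟩ := hdec.surjective (N j)
  have h1 : (DirectSum.coeAddMonoidHom Bp) (F x) = c := by
    rw [← AddMonoidHom.comp_apply, key, AddMonoidHom.comp_apply, hx, hLapp]
  have h2 : (DirectSum.coeAddMonoidHom Bp)
      (DirectSum.of (fun p => ↥(Bp p)) 0 ⟨c, hc0⟩) = c := by
    rw [DirectSum.coeAddMonoidHom_of]
  have heq : F x = DirectSum.of (fun p => ↥(Bp p)) 0 ⟨c, hc0⟩ :=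
    hdec.injective (h1.trans h2.symm)
  -- evaluating at the zero grade kills F
  have key2 : (DFinsupp.evalAddMonoidHom (0 : Fin n → ℤ)).comp F = 0 := by
    refine DirectSum.addHom_ext fun p v => ?_
    simp only [AddMonoidHom.comp_apply, AddMonoidHom.zero_apply]
    refine (congrArg (DFinsupp.evalAddMonoidHom (0 : Fin n → ℤ)) (hFof p v)).trans ?_
    obtain rfl | h := eq_or_ne p 0
    · show (DirectSum.of (fun p => ↥(Bp p)) 0 ((0 : Fin n → ℤ) i • v)) 0 = 0
      rw [DirectSum.of_eq_same]
      simp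
    · show (DirectSum.of (fun p => ↥(Bp p)) p (p i • v)) 0 = 0
      rw [DirectSum.of_eq_of_ne _ _ _ h.symm]
  have h3 : (0 : ↥(Bp 0)) = ⟨c, hc0⟩ := by
    have h4 := congrArg (DFinsupp.evalAddMonoidHom (0 : Fin n → ℤ)) heq
    have h6 : (DFinsupp.evalAddMonoidHom (0 : Fin n → ℤ)) (F x) = 0 := by
      have h7 := DFunLike.congr_fun key2 x
      simpa using h7
    have h5 : (DFinsupp.evalAddMonoidHom (0 : Fin n → ℤ))
        (DirectSum.of (fun p => ↥(Bp p)) 0 ⟨c, hc0⟩) = ⟨c, hc0⟩ := by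
      show (DirectSum.of (fun p => ↥(Bp p)) 0 ⟨c, hc0⟩) 0 = _
      rw [DirectSum.of_eq_same]
    rw [h5, h6] at h4
    exact h4
  exact (Subtype.ext_iff.mp h3.symm)
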